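/- Let n ≥ 1, let a : S_n × S_n × ℝⁿ → [0,1] be a comparison array (measurable in its last argument, antisymmetric, and equivariant), let G be a subgroup of S_n, let ε be an exchangeable random vector in ℝⁿ, and let σ, π₁, …, π_B be i.i.d. uniform on G, independent of ε. Define the Monte-Carlo p-values p^MC(σ) = (1 + Σ_{b=1}^B a(π_b∘σ⁻¹, Id, ε)) / (1 + B) and p^MC(Id) = (1 + Σ_{b=1}^B a(π_b, Id, ε)) / (1 + B). Then p^MC(σ) has the same distribution as p^MC(Id), and consequently for every α ∈ [0,1], P(p^MC(Id) ≤ α) ≤ 2α, where this last probability is over ε and π₁, …, π_B. -/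

import Mathlib

open MeasureTheory
open scoped Classical ENNReal

private lemma count_aux {N : ℕ} (A : Fin N → Fin N → ℝ)
    (hsym : ∀ i j, A i j + A j i = 1) (hnn : ∀ i j, 0 ≤ A i j)
    {t : ℝ} (ht : 0 ≤ t) :
    ((Finset.univ.filter fun j => (2⁻¹ : ℝ) + ∑ i, A i j ≤ t).card : ℝ) ≤ 2 * t := by
  classical
  set S := Finset.univ.filter fun j : Fin N => (2⁻¹ : ℝ) + ∑ i, A i j ≤ t with hSdef
  set k := S.card with hk
  have h2 : 2 * (∑ j ∈ S, ∑ i ∈ S, A i j) = (k : ℝ) * k := by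
    have hswap : ∑ j ∈ S, ∑ i ∈ S, A i j = ∑ j ∈ S, ∑ i ∈ S, A j i :=
      Finset.sum_comm
    have : ∑ j ∈ S, ∑ i ∈ S, A i j + ∑ j ∈ S, ∑ i ∈ S, A j i
        = ∑ j ∈ S, ∑ i ∈ S, (1 : ℝ) := by
      rw [← Finset.sum_add_distrib]
      refine Finset.sum_congr rfl fun j _ => ?_
      rw [← Finset.sum_add_distrib]
      exact Finset.sum_congr rfl fun i _ => hsym i j
    simp only [Finset.sum_const, nsmul_eq_mul, mul_one] at this
    nlinarith [hswap, this]
  have hub : ∑ j ∈ S, ((2⁻¹ : ℝ) + ∑ i, A i j) ≤ (k : ℝ) * t := by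
    calc ∑ j ∈ S, ((2⁻¹ : ℝ) + ∑ i, A i j) ≤ ∑ _j ∈ S, t :=
          Finset.sum_le_sum fun j hj => (Finset.mem_filter.mp hj).2
      _ = (k : ℝ) * t := by simp [mul_comm, hk]
  have hlb : (k : ℝ) * 2⁻¹ + ∑ j ∈ S, ∑ i ∈ S, A i j
      ≤ ∑ j ∈ S, ((2⁻¹ : ℝ) + ∑ i, A i j) := by
    rw [Finset.sum_add_distrib]
    refine add_le_add (le_of_eq (by simp [mul_comm, hk])) ?_
    exact Finset.sum_le_sum fun j _ =>
        Finset.sum_le_sum_of_subset_of_nonneg (Finset.subset_univ S)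
          (fun i _ _ => hnn i j)
  rcases Nat.eq_zero_or_pos k with h0 | hpos
  · simp [h0]; positivity
  · have hk1 : (1 : ℝ) ≤ (k : ℝ) := by exact_mod_cast hpos
    nlinarith

/-- **Monte-Carlo p-value with i.i.d. uniform permutations on a subgroup.**
If `σ, π₁, …, π_B` are i.i.d. uniform on a subgroup `G ≤ S_n`, independent of the
exchangeable vector `ε`, then `p^MC(σ)` has the same distribution as `p^MC(Id)`,
and consequently `P(p^MC(Id) ≤ α) ≤ 2α`, a probability over `ε` and `π₁,…,π_B`. -/
theorem monteCarlo_pvalue_subgroup_validity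
    {n B : ℕ} (hn : 1 ≤ n)
    (a : Equiv.Perm (Fin n) → Equiv.Perm (Fin n) → (Fin n → ℝ) → ℝ)
    (ha01 : ∀ τ σ e, a τ σ e ∈ Set.Icc (0 : ℝ) 1)
    (hameas : ∀ τ σ, Measurable (a τ σ))
    (hasym : ∀ τ σ e, a τ σ e + a σ τ e = 1)
    (haequi : ∀ (π₁ π₂ ρ : Equiv.Perm (Fin n)) (e : Fin n → ℝ),
      a π₁ π₂ (fun i => e (ρ i)) = a (π₁ * ρ⁻¹) (π₂ * ρ⁻¹) e)
    (G : Subgroup (Equiv.Perm (Fin n)))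
    -- the uniform pmf on `G`:
    (f : Equiv.Perm (Fin n) → ℝ)
    (hf : ∀ π, f π = if π ∈ G then ((Nat.card G : ℝ))⁻¹ else 0)
    {Ω : Type*} [MeasurableSpace Ω] (P : Measure Ω) [IsProbabilityMeasure P]
    (ε : Ω → Fin n → ℝ) (hε : Measurable ε)
    (hexch : ∀ π : Equiv.Perm (Fin n),
      Measure.map (fun ω => fun i => ε ω (π i)) P = Measure.map ε P)
    (σ : Ω → Equiv.Perm (Fin n)) (perms : Ω → Fin B → Equiv.Perm (Fin n))
    (hσmeas : ∀ τ : Equiv.Perm (Fin n), MeasurableSet {ω | σ ω = τ})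
    (hpermsMeas : ∀ g : Fin B → Equiv.Perm (Fin n), MeasurableSet {ω | perms ω = g})
    -- `σ, π₁, …, π_B` are i.i.d. uniform on `G`, independent of `ε`:
    (hiid : ∀ s : Set (Fin n → ℝ), MeasurableSet s →
      ∀ (τ : Equiv.Perm (Fin n)) (g : Fin B → Equiv.Perm (Fin n)),
      P {ω | ε ω ∈ s ∧ σ ω = τ ∧ perms ω = g}
        = P {ω | ε ω ∈ s} * ENNReal.ofReal (f τ)
            * ∏ b : Fin B, ENNReal.ofReal (f (g b)))
    (α : ℝ) (hα : α ∈ Set.Icc (0 : ℝ) 1) :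
    Measure.map
        (fun ω => (1 + ∑ b : Fin B, a (perms ω b * (σ ω)⁻¹) 1 (ε ω)) / (1 + B)) P
      = Measure.map
        (fun ω => (1 + ∑ b : Fin B, a (perms ω b) 1 (ε ω)) / (1 + B)) P
    ∧ P {ω | (1 + ∑ b : Fin B, a (perms ω b) 1 (ε ω)) / (1 + B) ≤ α}
        ≤ ENNReal.ofReal (2 * α) := by
  classical
  obtain ⟨hα0, hα1⟩ := hα
  letI mP : MeasurableSpace (Equiv.Perm (Fin n)) := ⊤
  haveI : MeasurableSingletonClass (Equiv.Perm (Fin n)) := ⟨fun _ => trivial⟩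
  -- measurability of σ, perms and of composed functions
  have hσm : Measurable σ := measurable_to_countable' fun τ => by
    simpa [Set.preimage, Set.mem_singleton_iff] using hσmeas τ
  have hpm : Measurable perms := measurable_to_countable' fun g => by
    simpa [Set.preimage, Set.mem_singleton_iff] using hpermsMeas g
  have hcomp : ∀ (c : Equiv.Perm (Fin n) → (Fin B → Equiv.Perm (Fin n)) →
      (Fin n → ℝ) → ℝ), (∀ τ g, Measurable (c τ g)) →
      Measurable fun ω => c (σ ω) (perms ω) (ε ω) := by
    intro c hc
    have hW : Measurable fun x : (Fin n → ℝ) ×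
        (Equiv.Perm (Fin n) × (Fin B → Equiv.Perm (Fin n))) => c x.2.1 x.2.2 x.1 :=
      measurable_from_prod_countable_left fun y => hc y.1 y.2
    exact hW.comp (hε.prodMk (hσm.prodMk hpm))
  -- basic facts about the pmf
  set F : Equiv.Perm (Fin n) → ℝ≥0∞ := fun τ => ENNReal.ofReal (f τ) with hFdef
  have hf0 : ∀ τ, 0 ≤ f τ := by
    intro τ; rw [hf]; split <;> positivity
  have hcardG : 0 < (Nat.card G : ℝ) := by
    have : 0 < Nat.card G := Nat.card_pos
    exact_mod_cast this
  have hFsum : ∑ τ : Equiv.Perm (Fin n), F τ = 1 := by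
    have hreal : ∑ τ : Equiv.Perm (Fin n), f τ = 1 := by
      simp only [hf]
      rw [Finset.sum_ite, Finset.sum_const, Finset.sum_const_zero, add_zero,
        nsmul_eq_mul]
      have hcard : ((Finset.univ.filter fun x : Equiv.Perm (Fin n) => x ∈ G).card : ℝ)
          = (Nat.card G : ℝ) := by
        rw [Nat.card_eq_fintype_card, Fintype.card_subtype]
      rw [hcard, mul_inv_cancel₀ (ne_of_gt hcardG)]
    calc ∑ τ : Equiv.Perm (Fin n), F τ
        = ENNReal.ofReal (∑ τ : Equiv.Perm (Fin n), f τ) :=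
          (ENNReal.ofReal_sum_of_nonneg fun τ _ => hf0 τ).symm
      _ = 1 := by rw [hreal, ENNReal.ofReal_one]
  have hFG : ∀ {τ : Equiv.Perm (Fin n)}, τ ∈ G →
      ∀ g : Equiv.Perm (Fin n), F (g * τ) = F g := by
    intro τ hτ g
    simp only [hFdef, hf, mul_mem_cancel_right hτ]
  have hFnG : ∀ {τ : Equiv.Perm (Fin n)}, τ ∉ G → F τ = 0 := by
    intro τ hτ; simp [hFdef, hf, hτ]
  -- decomposition over the values of (σ, perms)
  have hdecomp : ∀ (s : Equiv.Perm (Fin n) → (Fin B → Equiv.Perm (Fin n)) →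
      Set (Fin n → ℝ)), (∀ τ g, MeasurableSet (s τ g)) →
      P {ω | ε ω ∈ s (σ ω) (perms ω)}
        = ∑ τ : Equiv.Perm (Fin n), ∑ g : Fin B → Equiv.Perm (Fin n),
            P {ω | ε ω ∈ s τ g} * F τ * ∏ b : Fin B, F (g b) := by
    intro s hs
    have hU : {ω | ε ω ∈ s (σ ω) (perms ω)} =
        ⋃ p : Equiv.Perm (Fin n) × (Fin B → Equiv.Perm (Fin n)),
          {ω | ε ω ∈ s p.1 p.2 ∧ σ ω = p.1 ∧ perms ω = p.2} := by
      ext ω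
      simp only [Set.mem_setOf_eq, Set.mem_iUnion]
      constructor
      · intro h; exact ⟨(σ ω, perms ω), h, rfl, rfl⟩
      · rintro ⟨p, h, h1, h2⟩; rw [h1, h2]; exact h
    have hms : ∀ p : Equiv.Perm (Fin n) × (Fin B → Equiv.Perm (Fin n)),
        MeasurableSet {ω | ε ω ∈ s p.1 p.2 ∧ σ ω = p.1 ∧ perms ω = p.2} :=
      fun p => (hε (hs p.1 p.2)).inter ((hσmeas p.1).inter (hpermsMeas p.2))
    have hdisj : Pairwise (Function.onFun Disjoint fun p :
        Equiv.Perm (Fin n) × (Fin B → Equiv.Perm (Fin n)) =>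
        {ω | ε ω ∈ s p.1 p.2 ∧ σ ω = p.1 ∧ perms ω = p.2}) := by
      intro p q hpq
      refine Set.disjoint_left.mpr ?_
      rintro ω ⟨_, h1, h2⟩ ⟨_, h3, h4⟩
      exact hpq (Prod.ext (h1 ▸ h3 ▸ rfl) (h2 ▸ h4 ▸ rfl))
    rw [hU, measure_iUnion hdisj hms, tsum_fintype, Fintype.sum_prod_type]
    exact Finset.sum_congr rfl fun τ _ => Finset.sum_congr rfl fun g _ =>
      hiid (s τ g) (hs τ g) τ g
  have hposB : (0 : ℝ) < 1 + (B : ℝ) := by positivity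
  -- the two p-value statistics agree in distribution on every measurable set
  have hmain : ∀ s : Set ℝ, MeasurableSet s →
      P {ω | (1 + ∑ b : Fin B, a (perms ω b * (σ ω)⁻¹) 1 (ε ω)) / (1 + B) ∈ s}
        = P {ω | (1 + ∑ b : Fin B, a (perms ω b) 1 (ε ω)) / (1 + B) ∈ s} := by
    intro s hs
    have hmeas1 : ∀ (τ : Equiv.Perm (Fin n)) (g : Fin B → Equiv.Perm (Fin n)),
        MeasurableSet {e : Fin n → ℝ |
          (1 + ∑ b : Fin B, a (g b * τ⁻¹) 1 e) / (1 + B) ∈ s} := fun τ g =>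
      ((measurable_const.add (Finset.measurable_sum _ fun b _ =>
        hameas _ _)).div_const _) hs
    have hmeas2 : ∀ (τ : Equiv.Perm (Fin n)) (g : Fin B → Equiv.Perm (Fin n)),
        MeasurableSet {e : Fin n → ℝ |
          (1 + ∑ b : Fin B, a (g b) 1 e) / (1 + B) ∈ s} := fun τ g =>
      ((measurable_const.add (Finset.measurable_sum _ fun b _ =>
        hameas _ _)).div_const _) hs
    have e1 : {ω | (1 + ∑ b : Fin B, a (perms ω b * (σ ω)⁻¹) 1 (ε ω)) / (1 + B) ∈ s}
        = {ω | ε ω ∈ (fun τ g => {e : Fin n → ℝ |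
            (1 + ∑ b : Fin B, a (g b * τ⁻¹) 1 e) / (1 + B) ∈ s}) (σ ω) (perms ω)} := rfl
    have e2 : {ω | (1 + ∑ b : Fin B, a (perms ω b) 1 (ε ω)) / (1 + B) ∈ s}
        = {ω | ε ω ∈ (fun (τ : Equiv.Perm (Fin n)) g => {e : Fin n → ℝ |
            (1 + ∑ b : Fin B, a (g b) 1 e) / (1 + B) ∈ s}) (σ ω) (perms ω)} := rfl
    rw [e1, e2, hdecomp _ hmeas1, hdecomp _ hmeas2]
    refine Finset.sum_congr rfl fun τ _ => ?_
    by_cases hτ : τ ∈ G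
    · refine Fintype.sum_equiv
        (Equiv.piCongrRight fun _ : Fin B => Equiv.mulRight τ⁻¹) _ _ fun g => ?_
      simp only [Equiv.piCongrRight_apply, Equiv.coe_mulRight, Pi.map_apply]
      congr 1
      exact Finset.prod_congr rfl fun b _ => (hFG (inv_mem hτ) (g b)).symm
    · simp [hFnG hτ]
  -- measurability of the two statistics
  have hm1 : Measurable fun ω =>
      (1 + ∑ b : Fin B, a (perms ω b * (σ ω)⁻¹) 1 (ε ω)) / (1 + B) :=
    hcomp (fun τ g e => (1 + ∑ b : Fin B, a (g b * τ⁻¹) 1 e) / (1 + B))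
      (fun τ g => (measurable_const.add (Finset.measurable_sum _ fun b _ =>
        hameas _ _)).div_const _)
  have hm2 : Measurable fun ω =>
      (1 + ∑ b : Fin B, a (perms ω b) 1 (ε ω)) / (1 + B) :=
    hcomp (fun τ g e => (1 + ∑ b : Fin B, a (g b) 1 e) / (1 + B))
      (fun τ g => (measurable_const.add (Finset.measurable_sum _ fun b _ =>
        hameas _ _)).div_const _)
  constructor
  · refine Measure.ext fun s hs => ?_
    rw [Measure.map_apply hm1 hs, Measure.map_apply hm2 hs]
    exact hmain s hs
  -- now the 2α bound
  have ht0 : (0 : ℝ) ≤ α * (1 + (B : ℝ)) := mul_nonneg hα0 hposB.le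
  -- step 1: switch to the σ-shifted statistic
  have h1 : P {ω | (1 + ∑ b : Fin B, a (perms ω b) 1 (ε ω)) / (1 + B) ≤ α}
      = P {ω | (1 + ∑ b : Fin B, a (perms ω b * (σ ω)⁻¹) 1 (ε ω)) / (1 + B)
          ∈ Set.Iic α} := (hmain _ measurableSet_Iic).symm
  rw [h1]
  -- step 2: decompose
  have hmeasA : ∀ (τ : Equiv.Perm (Fin n)) (g : Fin B → Equiv.Perm (Fin n)),
      MeasurableSet {e : Fin n → ℝ |
        (1 + ∑ b : Fin B, a (g b * τ⁻¹) 1 e) / (1 + B) ∈ Set.Iic α} := fun τ g =>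
    ((measurable_const.add (Finset.measurable_sum _ fun b _ =>
      hameas _ _)).div_const _) measurableSet_Iic
  have e3 : {ω | (1 + ∑ b : Fin B, a (perms ω b * (σ ω)⁻¹) 1 (ε ω)) / (1 + B)
      ∈ Set.Iic α}
      = {ω | ε ω ∈ (fun τ g => {e : Fin n → ℝ |
          (1 + ∑ b : Fin B, a (g b * τ⁻¹) 1 e) / (1 + B) ∈ Set.Iic α})
          (σ ω) (perms ω)} := rfl
  rw [e3, hdecomp _ hmeasA]
  -- step 3: use exchangeability and equivariance
  have hstep : ∀ (τ : Equiv.Perm (Fin n)) (g : Fin B → Equiv.Perm (Fin n)),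
      P {ω | ε ω ∈ {e : Fin n → ℝ |
          (1 + ∑ b : Fin B, a (g b * τ⁻¹) 1 e) / (1 + B) ∈ Set.Iic α}}
      = P {ω | ε ω ∈ {e : Fin n → ℝ |
          1 + ∑ b : Fin B, a (g b) τ e ≤ α * (1 + (B : ℝ))}} := by
    intro τ g
    have hu : Measurable fun ω => fun i => ε ω (τ⁻¹ i) :=
      measurable_pi_lambda _ fun i => (measurable_pi_apply _).comp hε
    have h2 : P ((fun ω => fun i => ε ω (τ⁻¹ i)) ⁻¹' {e : Fin n → ℝ |
        (1 + ∑ b : Fin B, a (g b * τ⁻¹) 1 e) / (1 + B) ∈ Set.Iic α})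
        = P (ε ⁻¹' {e : Fin n → ℝ |
        (1 + ∑ b : Fin B, a (g b * τ⁻¹) 1 e) / (1 + B) ∈ Set.Iic α}) := by
      rw [← Measure.map_apply hu (hmeasA τ g), ← Measure.map_apply hε (hmeasA τ g),
        hexch τ⁻¹]
    have hsetEq : ((fun ω => fun i => ε ω (τ⁻¹ i)) ⁻¹' {e : Fin n → ℝ |
        (1 + ∑ b : Fin B, a (g b * τ⁻¹) 1 e) / (1 + B) ∈ Set.Iic α})
        = {ω | ε ω ∈ {e : Fin n → ℝ |
          1 + ∑ b : Fin B, a (g b) τ e ≤ α * (1 + (B : ℝ))}} := by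
      ext ω
      simp only [Set.mem_preimage, Set.mem_setOf_eq, Set.mem_Iic]
      have hb : ∀ b : Fin B,
          a (g b * τ⁻¹) 1 (fun i => ε ω (τ⁻¹ i)) = a (g b) τ (ε ω) := by
        intro b
        rw [haequi (g b * τ⁻¹) 1 τ⁻¹ (ε ω)]
        simp
      simp only [hb]
      rw [div_le_iff₀ hposB]
    calc P {ω | ε ω ∈ {e : Fin n → ℝ |
            (1 + ∑ b : Fin B, a (g b * τ⁻¹) 1 e) / (1 + B) ∈ Set.Iic α}}
        = P ((fun ω => fun i => ε ω (τ⁻¹ i)) ⁻¹' {e : Fin n → ℝ |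
            (1 + ∑ b : Fin B, a (g b * τ⁻¹) 1 e) / (1 + B) ∈ Set.Iic α}) := h2.symm
      _ = _ := by rw [hsetEq]
  -- replace each term using hstep
  have hrw : (∑ τ : Equiv.Perm (Fin n), ∑ g : Fin B → Equiv.Perm (Fin n),
      P {ω | ε ω ∈ {e : Fin n → ℝ |
        (1 + ∑ b : Fin B, a (g b * τ⁻¹) 1 e) / (1 + B) ∈ Set.Iic α}}
        * F τ * ∏ b : Fin B, F (g b))
      = ∑ τ : Equiv.Perm (Fin n), ∑ g : Fin B → Equiv.Perm (Fin n),
      P {ω | ε ω ∈ {e : Fin n → ℝ |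
        1 + ∑ b : Fin B, a (g b) τ e ≤ α * (1 + (B : ℝ))}}
        * F τ * ∏ b : Fin B, F (g b) :=
    Finset.sum_congr rfl fun τ _ => Finset.sum_congr rfl fun g _ => by
      rw [hstep τ g]
  rw [hrw]
  -- reindex over tuples of length B+1
  have hreindex : (∑ τ : Equiv.Perm (Fin n), ∑ g : Fin B → Equiv.Perm (Fin n),
      P {ω | ε ω ∈ {e : Fin n → ℝ |
        1 + ∑ b : Fin B, a (g b) τ e ≤ α * (1 + (B : ℝ))}}
        * F τ * ∏ b : Fin B, F (g b))
      = ∑ h : Fin (B + 1) → Equiv.Perm (Fin n),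
        P {ω | ε ω ∈ {e : Fin n → ℝ |
          2⁻¹ + ∑ i : Fin (B + 1), a (h i) (h 0) e ≤ α * (1 + (B : ℝ))}}
          * ∏ i : Fin (B + 1), F (h i) := by
    have hpair : (∑ τ : Equiv.Perm (Fin n), ∑ g : Fin B → Equiv.Perm (Fin n),
        P {ω | ε ω ∈ {e : Fin n → ℝ |
          1 + ∑ b : Fin B, a (g b) τ e ≤ α * (1 + (B : ℝ))}}
          * F τ * ∏ b : Fin B, F (g b))
        = ∑ p : Equiv.Perm (Fin n) × (Fin B → Equiv.Perm (Fin n)),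
          P {ω | ε ω ∈ {e : Fin n → ℝ |
            1 + ∑ b : Fin B, a (p.2 b) p.1 e ≤ α * (1 + (B : ℝ))}}
            * F p.1 * ∏ b : Fin B, F (p.2 b) :=
      (Fintype.sum_prod_type fun p : Equiv.Perm (Fin n) × (Fin B → Equiv.Perm (Fin n)) => P {ω | ε ω ∈ {e : Fin n → ℝ |
        1 + ∑ b : Fin B, a (p.2 b) p.1 e ≤ α * (1 + (B : ℝ))}}
        * F p.1 * ∏ b : Fin B, F (p.2 b)).symm
    rw [hpair]
    refine Fintype.sum_equiv (Fin.consEquiv fun _ => Equiv.Perm (Fin n)) _ _ ?_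
    rintro ⟨τ, g⟩
    have hset : {e : Fin n → ℝ | 2⁻¹ + ∑ i : Fin (B + 1),
        a ((Fin.cons τ g : Fin (B + 1) → Equiv.Perm (Fin n)) i)
          ((Fin.cons τ g : Fin (B + 1) → Equiv.Perm (Fin n)) 0) e ≤ α * (1 + (B : ℝ))}
        = {e : Fin n → ℝ | 1 + ∑ b : Fin B, a (g b) τ e ≤ α * (1 + (B : ℝ))} := by
      ext e
      have haa : a τ τ e = 2⁻¹ := by have := hasym τ τ e; linarith
      simp only [Set.mem_setOf_eq, Fin.sum_univ_succ, Fin.cons_zero, Fin.cons_succ,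
        haa]
      constructor <;> intro <;> linarith
    show _ = P {ω | ε ω ∈ {e : Fin n → ℝ | 2⁻¹ + ∑ i : Fin (B + 1),
        a ((Fin.cons τ g : Fin (B + 1) → Equiv.Perm (Fin n)) i)
          ((Fin.cons τ g : Fin (B + 1) → Equiv.Perm (Fin n)) 0) e ≤ α * (1 + (B : ℝ))}}
        * ∏ i : Fin (B + 1), F ((Fin.cons τ g : Fin (B + 1) → Equiv.Perm (Fin n)) i)
    rw [hset, Fin.prod_univ_succ]
    simp only [Fin.cons_zero, Fin.cons_succ]
    ring
  rw [hreindex]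
  -- exchangeability over the B+1 slots
  have hswap : ∀ j : Fin (B + 1),
      (∑ h : Fin (B + 1) → Equiv.Perm (Fin n),
        P {ω | ε ω ∈ {e : Fin n → ℝ |
          2⁻¹ + ∑ i : Fin (B + 1), a (h i) (h 0) e ≤ α * (1 + (B : ℝ))}}
          * ∏ i : Fin (B + 1), F (h i))
      = ∑ h : Fin (B + 1) → Equiv.Perm (Fin n),
        P {ω | ε ω ∈ {e : Fin n → ℝ |
          2⁻¹ + ∑ i : Fin (B + 1), a (h i) (h j) e ≤ α * (1 + (B : ℝ))}}
          * ∏ i : Fin (B + 1), F (h i) := by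
    intro j
    refine Fintype.sum_equiv
      (Equiv.arrowCongr (Equiv.swap (0 : Fin (B + 1)) j) (Equiv.refl _)) _ _ fun h => ?_
    have happ : ∀ i, (Equiv.arrowCongr (Equiv.swap (0 : Fin (B + 1)) j)
        (Equiv.refl (Equiv.Perm (Fin n)))) h i = h (Equiv.swap (0 : Fin (B + 1)) j i) := by
      intro i
      simp [Equiv.arrowCongr_apply, Equiv.symm_swap]
    have hset : {e : Fin n → ℝ |
        2⁻¹ + ∑ i : Fin (B + 1), a (h i) (h 0) e ≤ α * (1 + (B : ℝ))}
        = {e : Fin n → ℝ | 2⁻¹ + ∑ i : Fin (B + 1),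
            a (h (Equiv.swap (0 : Fin (B + 1)) j i))
              (h (Equiv.swap (0 : Fin (B + 1)) j j)) e ≤ α * (1 + (B : ℝ))} := by
      have h0 : Equiv.swap (0 : Fin (B + 1)) j j = 0 := Equiv.swap_apply_right 0 j
      rw [h0]
      ext e
      simp only [Set.mem_setOf_eq]
      rw [Equiv.sum_comp (Equiv.swap (0 : Fin (B + 1)) j)
        (fun i => a (h i) (h 0) e)]
    have hprod : (∏ i : Fin (B + 1), F (h (Equiv.swap (0 : Fin (B + 1)) j i)))
        = ∏ i : Fin (B + 1), F (h i) :=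
      Equiv.prod_comp (Equiv.swap (0 : Fin (B + 1)) j) (fun i => F (h i))
    simp only [happ]
    rw [hset, hprod]
  -- the counting bound
  have hcount : ∀ h : Fin (B + 1) → Equiv.Perm (Fin n),
      (∑ j : Fin (B + 1), P {ω | ε ω ∈ {e : Fin n → ℝ |
        2⁻¹ + ∑ i : Fin (B + 1), a (h i) (h j) e ≤ α * (1 + (B : ℝ))}})
      ≤ ENNReal.ofReal (2 * (α * (1 + (B : ℝ)))) := by
    intro h
    have hEm : ∀ j : Fin (B + 1), MeasurableSet {e : Fin n → ℝ |
        2⁻¹ + ∑ i : Fin (B + 1), a (h i) (h j) e ≤ α * (1 + (B : ℝ))} := fun j =>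
      measurableSet_le (measurable_const.add
        (Finset.measurable_sum _ fun i _ => hameas _ _)) measurable_const
    calc (∑ j : Fin (B + 1), P {ω | ε ω ∈ {e : Fin n → ℝ |
            2⁻¹ + ∑ i : Fin (B + 1), a (h i) (h j) e ≤ α * (1 + (B : ℝ))}})
        = ∑ j : Fin (B + 1), ∫⁻ ω, (ε ⁻¹' {e : Fin n → ℝ |
            2⁻¹ + ∑ i : Fin (B + 1), a (h i) (h j) e ≤ α * (1 + (B : ℝ))}).indicator
            (fun _ => (1 : ℝ≥0∞)) ω ∂P := by
          refine Finset.sum_congr rfl fun j _ => ?_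
          rw [lintegral_indicator_const (hε (hEm j)), one_mul]
          rfl
      _ = ∫⁻ ω, ∑ j : Fin (B + 1), (ε ⁻¹' {e : Fin n → ℝ |
            2⁻¹ + ∑ i : Fin (B + 1), a (h i) (h j) e ≤ α * (1 + (B : ℝ))}).indicator
            (fun _ => (1 : ℝ≥0∞)) ω ∂P :=
          (lintegral_finset_sum _ fun j _ =>
            measurable_one.indicator (hε (hEm j))).symm
      _ ≤ ∫⁻ _ω, ENNReal.ofReal (2 * (α * (1 + (B : ℝ)))) ∂P := by
          refine lintegral_mono fun ω => ?_
          have hsum : (∑ j : Fin (B + 1), (ε ⁻¹' {e : Fin n → ℝ |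
              2⁻¹ + ∑ i : Fin (B + 1), a (h i) (h j) e ≤ α * (1 + (B : ℝ))}).indicator
              (fun _ => (1 : ℝ≥0∞)) ω)
              = ((Finset.univ.filter fun j : Fin (B + 1) =>
                  (2⁻¹ : ℝ) + ∑ i : Fin (B + 1), a (h i) (h j) (ε ω)
                    ≤ α * (1 + (B : ℝ))).card : ℝ≥0∞) := by
            rw [← Finset.sum_boole]
            refine Finset.sum_congr rfl fun j _ => ?_
            simp [Set.indicator_apply]
          rw [hsum]
          have hcard := count_aux (fun i j => a (h i) (h j) (ε ω))
            (fun i j => hasym (h i) (h j) (ε ω))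
            (fun i j => (ha01 (h i) (h j) (ε ω)).1) ht0
          calc ((Finset.univ.filter fun j : Fin (B + 1) =>
                  (2⁻¹ : ℝ) + ∑ i : Fin (B + 1), a (h i) (h j) (ε ω)
                    ≤ α * (1 + (B : ℝ))).card : ℝ≥0∞)
              = ENNReal.ofReal ((Finset.univ.filter fun j : Fin (B + 1) =>
                  (2⁻¹ : ℝ) + ∑ i : Fin (B + 1), a (h i) (h j) (ε ω)
                    ≤ α * (1 + (B : ℝ))).card : ℝ) := (ENNReal.ofReal_natCast _).symm
            _ ≤ ENNReal.ofReal (2 * (α * (1 + (B : ℝ)))) :=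
                ENNReal.ofReal_le_ofReal hcard
      _ = ENNReal.ofReal (2 * (α * (1 + (B : ℝ)))) := by
          simp [lintegral_const]
  -- total mass of the tuple weights is one
  have hsum1 : (∑ h : Fin (B + 1) → Equiv.Perm (Fin n),
      ∏ i : Fin (B + 1), F (h i)) = 1 := by
    have := Finset.prod_univ_sum (fun _ : Fin (B + 1) =>
      (Finset.univ : Finset (Equiv.Perm (Fin n)))) (fun _ τ => F τ)
    rw [Fintype.piFinset_univ] at this
    rw [← this]
    simp [hFsum]
  -- put everything together
  have hfinal : ((B + 1 : ℕ) : ℝ≥0∞) * (∑ h : Fin (B + 1) → Equiv.Perm (Fin n),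
      P {ω | ε ω ∈ {e : Fin n → ℝ |
        2⁻¹ + ∑ i : Fin (B + 1), a (h i) (h 0) e ≤ α * (1 + (B : ℝ))}}
        * ∏ i : Fin (B + 1), F (h i))
      ≤ ((B + 1 : ℕ) : ℝ≥0∞) * ENNReal.ofReal (2 * α) := by
    calc ((B + 1 : ℕ) : ℝ≥0∞) * (∑ h : Fin (B + 1) → Equiv.Perm (Fin n),
          P {ω | ε ω ∈ {e : Fin n → ℝ |
            2⁻¹ + ∑ i : Fin (B + 1), a (h i) (h 0) e ≤ α * (1 + (B : ℝ))}}
            * ∏ i : Fin (B + 1), F (h i))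
        = ∑ j : Fin (B + 1), ∑ h : Fin (B + 1) → Equiv.Perm (Fin n),
            P {ω | ε ω ∈ {e : Fin n → ℝ |
              2⁻¹ + ∑ i : Fin (B + 1), a (h i) (h j) e ≤ α * (1 + (B : ℝ))}}
              * ∏ i : Fin (B + 1), F (h i) := by
          rw [Finset.sum_congr rfl fun j (_ : j ∈ Finset.univ) => (hswap j).symm]
          simp [Finset.sum_const, Finset.card_univ, nsmul_eq_mul]
      _ = ∑ h : Fin (B + 1) → Equiv.Perm (Fin n),
            (∑ j : Fin (B + 1), P {ω | ε ω ∈ {e : Fin n → ℝ |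
              2⁻¹ + ∑ i : Fin (B + 1), a (h i) (h j) e ≤ α * (1 + (B : ℝ))}})
              * ∏ i : Fin (B + 1), F (h i) := by
          rw [Finset.sum_comm]
          exact Finset.sum_congr rfl fun h _ => (Finset.sum_mul _ _ _).symm
      _ ≤ ∑ h : Fin (B + 1) → Equiv.Perm (Fin n),
            ENNReal.ofReal (2 * (α * (1 + (B : ℝ)))) * ∏ i : Fin (B + 1), F (h i) :=
          Finset.sum_le_sum fun h _ => mul_le_mul_left (hcount h) _
      _ = ENNReal.ofReal (2 * (α * (1 + (B : ℝ)))) *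
            ∑ h : Fin (B + 1) → Equiv.Perm (Fin n), ∏ i : Fin (B + 1), F (h i) :=
          (Finset.mul_sum _ _ _).symm
      _ = ENNReal.ofReal (2 * (α * (1 + (B : ℝ)))) := by rw [hsum1, mul_one]
      _ = ((B + 1 : ℕ) : ℝ≥0∞) * ENNReal.ofReal (2 * α) := by
          rw [show (2 : ℝ) * (α * (1 + (B : ℝ))) = ((B + 1 : ℕ) : ℝ) * (2 * α) by
            push_cast; ring]
          rw [ENNReal.ofReal_mul (by positivity), ENNReal.ofReal_natCast]
  exact (ENNReal.mul_le_mul_iff_right (by exact_mod_cast Nat.succ_ne_zero B)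
    (ENNReal.natCast_ne_top _)).mp hfinal
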